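/- Let m ≥ 2, n_k ≥ 2 for all k, let C ∈ ℝ^{n_1×⋯×n_m} be an entrywise nonnegative cost tensor, η > 0, and r_k ∈ Δ^{n_k} for k = 1,…,m. Let K = exp(−C/η) and let K̃ be entrywise strictly positive with ||log(K) − log(K̃)||_∞ ≤ ε_log for some 0 < ε_log ≤ 1. Let P̃ be a positive diagonal scaling of K̃ with ||P̃||_1 = 1 satisfying Σ_{k=1}^m ||r_k(P̃) − r_k||_1 ≤ ε_stop for some ε_stop > 0, and let P̂ ∈ B(r_1,…,r_m) satisfy ||P̂ − P̃||_1 ≤ 2 Σ_{k=1}^m ||r_k − r_k(P̃)||_1. Let P* be a minimizer of ⟨C, ·⟩ over B(r_1,…,r_m). Then ⟨C, P̂⟩ − ⟨C, P*⟩ ≤ 2 η ε_log + 2 η Σ_{k=1}^m log(n_k) + 4 ||C||_∞ ε_stop. -/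
import Mathlib


open Finset

namespace MOT

/-- The index set of a tensor with mode sizes `n 0, …, n (m-1)`. -/
abbrev Idx {m : ℕ} (n : Fin m → ℕ) := ∀ k : Fin m, Fin (n k)

/-- A real tensor of order `m` with mode sizes `n k`. -/
abbrev Tensor {m : ℕ} (n : Fin m → ℕ) := Idx n → ℝ

/-- The `k`-th marginal of a tensor: `(r_k(X))_j = ∑_{I : i_k = j} X_I`. -/
noncomputable def marginal {m : ℕ} {n : Fin m → ℕ} (X : Tensor n) (k : Fin m)
    (j : Fin (n k)) : ℝ :=
  ∑ I : Idx n, if I k = j then X I else 0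

/-- The entrywise ℓ¹-norm of a tensor. -/
noncomputable def tnorm1 {m : ℕ} {n : Fin m → ℕ} (X : Tensor n) : ℝ :=
  ∑ I : Idx n, |X I|

/-- The uniform norm (maximum absolute entry) of a real-valued family. -/
noncomputable def supAbs {ι : Type*} (X : ι → ℝ) : ℝ := ⨆ i, |X i|

/-- The ℓ¹-norm of a vector. -/
noncomputable def vnorm1 {N : ℕ} (v : Fin N → ℝ) : ℝ := ∑ j, |v j|

/-- The Euclidean norm of a vector. -/
noncomputable def vnorm2 {N : ℕ} (v : Fin N → ℝ) : ℝ := Real.sqrt (∑ j, v j ^ 2)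

/-- The Euclidean inner product of two vectors. -/
noncomputable def vinner {N : ℕ} (v w : Fin N → ℝ) : ℝ := ∑ j, v j * w j

/-- `v ∈ Δ^N`: entrywise strictly positive with entries summing to 1. -/
def IsSimplex {N : ℕ} (v : Fin N → ℝ) : Prop := (∀ j, 0 < v j) ∧ ∑ j, v j = 1

/-- `P ∈ B(r_1,…,r_m)`: entrywise nonnegative with prescribed marginals. -/
def Feasible {m : ℕ} {n : Fin m → ℕ} (r : ∀ k : Fin m, Fin (n k) → ℝ)
    (P : Tensor n) : Prop :=
  (∀ I, 0 ≤ P I) ∧ ∀ k j, marginal P k j = r k j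

/-- The entropy `H(P) = -∑_I P_I log P_I` (with `0 · log 0 = 0`). -/
noncomputable def entropy {m : ℕ} {n : Fin m → ℕ} (P : Tensor n) : ℝ :=
  -∑ I : Idx n, P I * Real.log (P I)

/-- The inner product `⟨X, Y⟩ = ∑_I X_I Y_I` of two tensors. -/
noncomputable def tinner {m : ℕ} {n : Fin m → ℕ} (X Y : Tensor n) : ℝ :=
  ∑ I : Idx n, X I * Y I

/-- The entropic transport cost `V_C^η(P) = ⟨C, P⟩ − η H(P)`. -/
noncomputable def entCost {m : ℕ} {n : Fin m → ℕ} (C : Tensor n) (η : ℝ)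
    (P : Tensor n) : ℝ :=
  tinner C P - η * entropy P

/-- `P` is a positive diagonal scaling of `K`. -/
def IsScaling {m : ℕ} {n : Fin m → ℕ} (K P : Tensor n) : Prop :=
  ∃ β : ∀ k : Fin m, Fin (n k) → ℝ, ∀ I, P I = K I * ∏ k, Real.exp (β k (I k))

end MOT
namespace MOT
section Aux
variable {m : ℕ} {n : Fin m → ℕ}

lemma sum_marginal (X : Tensor n) (k : Fin m) :
    ∑ j, marginal X k j = ∑ I : Idx n, X I := by
  unfold marginal
  rw [Finset.sum_comm]
  exact Finset.sum_congr rfl fun I _ => by simp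

lemma sum_mul_right (X : Tensor n) (k : Fin m) (g : Fin (n k) → ℝ) :
    ∑ I : Idx n, X I * g (I k) = ∑ j, g j * marginal X k j := by
  unfold marginal
  simp_rw [Finset.mul_sum, mul_ite, mul_zero]
  rw [Finset.sum_comm]
  exact Finset.sum_congr rfl fun I _ => by simp [mul_comm]

lemma marginal_nonneg {X : Tensor n} (hX : ∀ I, 0 ≤ X I) (k : Fin m) (j : Fin (n k)) :
    0 ≤ marginal X k j := by
  unfold marginal
  exact Finset.sum_nonneg fun I _ => by split_ifs; exacts [hX I, le_rfl]

lemma marginal_add (X Y : Tensor n) (k : Fin m) (j : Fin (n k)) :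
    marginal (fun I => X I + Y I) k j = marginal X k j + marginal Y k j := by
  unfold marginal
  rw [← Finset.sum_add_distrib]
  exact Finset.sum_congr rfl fun I _ => by split_ifs <;> simp

lemma marginal_div (X : Tensor n) (a : ℝ) (k : Fin m) (j : Fin (n k)) :
    marginal (fun I => X I / a) k j = marginal X k j / a := by
  unfold marginal
  rw [Finset.sum_div]
  exact Finset.sum_congr rfl fun I _ => by split_ifs <;> simp

lemma sum_prod_eval (v : ∀ k : Fin m, Fin (n k) → ℝ) :
    ∑ I : Idx n, ∏ k, v k (I k) = ∏ k, ∑ j, v k j := by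
  rw [Finset.prod_univ_sum]
  rw [Fintype.piFinset_univ]

lemma sum_mul_sum_modes (X : Tensor n) (β : ∀ k : Fin m, Fin (n k) → ℝ) :
    ∑ I : Idx n, X I * ∑ k, β k (I k) = ∑ k, ∑ j, β k j * marginal X k j := by
  simp_rw [Finset.mul_sum]
  rw [Finset.sum_comm]
  exact Finset.sum_congr rfl fun k _ => sum_mul_right X k (β k)

lemma marginal_prod (v : ∀ k : Fin m, Fin (n k) → ℝ) (k : Fin m) (j : Fin (n k)) :
    marginal (fun I => ∏ l, v l (I l)) k j
      = v k j * ∏ l ∈ Finset.univ.erase k, ∑ i, v l i := by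
  classical
  set w : ∀ l : Fin m, Fin (n l) → ℝ :=
    Function.update v k (fun i => if i = j then v k i else 0) with hw
  have hA : ∀ I : Idx n, (if I k = j then ∏ l, v l (I l) else 0) = ∏ l, w l (I l) := by
    intro I
    have h1 : ∏ l, w l (I l) = w k (I k) * ∏ l ∈ Finset.univ.erase k, w l (I l) :=
      (Finset.mul_prod_erase Finset.univ _ (Finset.mem_univ k)).symm
    have h2 : ∀ l ∈ Finset.univ.erase k, w l (I l) = v l (I l) := by
      intro l hl
      rw [hw, Function.update_of_ne (Finset.ne_of_mem_erase hl)]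
    have h3 : w k (I k) = if I k = j then v k (I k) else 0 := by
      rw [hw, Function.update_self]
    have h4 : ∏ l, v l (I l) = v k (I k) * ∏ l ∈ Finset.univ.erase k, v l (I l) :=
      (Finset.mul_prod_erase Finset.univ _ (Finset.mem_univ k)).symm
    rw [h1, Finset.prod_congr rfl h2, h3]
    split_ifs with h
    · rw [h4]
    · simp
  unfold marginal
  simp_rw [hA]
  rw [sum_prod_eval]
  rw [← Finset.mul_prod_erase Finset.univ (fun l => ∑ i, w l i) (Finset.mem_univ k)]
  congr 1
  · rw [hw]
    simp
  · exact Finset.prod_congr rfl fun l hl => Finset.sum_congr rfl fun i _ => by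
      rw [hw, Function.update_of_ne (Finset.ne_of_mem_erase hl)]

end Aux
end MOT

namespace MOT
section Aux2
variable {m : ℕ} {n : Fin m → ℕ}

lemma abs_le_supAbs {ι : Type*} [Finite ι] (f : ι → ℝ) (i : ι) : |f i| ≤ supAbs f := by
  unfold supAbs
  exact le_ciSup (f := fun i => |f i|) (Set.Finite.bddAbove (Set.finite_range _)) i

lemma supAbs_nonneg {ι : Type*} [Finite ι] [Nonempty ι] (f : ι → ℝ) : 0 ≤ supAbs f :=
  le_trans (abs_nonneg _) (abs_le_supAbs f (Classical.arbitrary ι))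

lemma tinner_le_supAbs_mul (C X : Tensor n) : tinner C X ≤ supAbs C * tnorm1 X := by
  unfold tinner tnorm1
  rw [Finset.mul_sum]
  refine Finset.sum_le_sum fun I _ => ?_
  calc C I * X I ≤ |C I * X I| := le_abs_self _
    _ = |C I| * |X I| := abs_mul _ _
    _ ≤ supAbs C * |X I| := mul_le_mul_of_nonneg_right (abs_le_supAbs C I) (abs_nonneg _)

lemma entropy_nonneg {P : Tensor n} (h0 : ∀ I, 0 ≤ P I) (h1 : ∑ I : Idx n, P I = 1) :
    0 ≤ entropy P := by
  unfold entropy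
  rw [neg_nonneg]
  refine Finset.sum_nonpos fun I _ => ?_
  have hle : P I ≤ 1 := by
    rw [← h1]
    exact Finset.single_le_sum (fun J _ => h0 J) (Finset.mem_univ I)
  exact mul_nonpos_iff.mpr (Or.inl ⟨h0 I, Real.log_nonpos (h0 I) hle⟩)

lemma entropy_le_log_card {P : Tensor n} (hpos : ∀ I, 0 < P I)
    (h1 : ∑ I : Idx n, P I = 1) :
    entropy P ≤ Real.log (Fintype.card (Idx n)) := by
  cases isEmpty_or_nonempty (Idx n) with
  | inl h =>
    exfalso
    rw [Finset.sum_eq_zero (fun I _ => absurd (Finset.mem_univ I) (by simp))] at h1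
    · norm_num at h1
  | inr h =>
    have hN : (0:ℝ) < Fintype.card (Idx n) := by
      have := Fintype.card_pos_iff.mpr h
      positivity
    set N : ℝ := (Fintype.card (Idx n) : ℝ) with hNdef
    have hterm : ∀ I : Idx n, -(P I * Real.log (P I)) ≤ 1/N - P I + P I * Real.log N := by
      intro I
      have hx : 0 < 1 / (P I * N) := one_div_pos.mpr (mul_pos (hpos I) hN)
      have hlog := Real.log_le_sub_one_of_pos hx
      rw [one_div, Real.log_inv, Real.log_mul (ne_of_gt (hpos I)) (ne_of_gt hN)] at hlog
      have h2 := mul_le_mul_of_nonneg_left hlog (le_of_lt (hpos I))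
      have h3 : P I * (P I * N)⁻¹ = 1 / N := by
        rw [mul_inv, ← mul_assoc, mul_inv_cancel₀ (ne_of_gt (hpos I)), one_mul, one_div]
      rw [mul_sub, h3] at h2
      nlinarith [h2]
    have hsum := Finset.sum_le_sum (s := (Finset.univ : Finset (Idx n))) (fun I _ => hterm I)
    rw [Finset.sum_neg_distrib, Finset.sum_add_distrib, Finset.sum_sub_distrib,
      ← Finset.sum_mul, h1, Finset.sum_const, Finset.card_univ, nsmul_eq_mul] at hsum
    rw [← hNdef] at hsum
    have hN' : N ≠ 0 := ne_of_gt hN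
    have hcard : N * (1/N) = 1 := by field_simp
    unfold entropy
    nlinarith [hsum]

lemma sum_mul_log_le {P Q : Tensor n} (hP : ∀ I, 0 < P I) (hQ : ∀ I, 0 ≤ Q I)
    (hP1 : ∑ I : Idx n, P I = 1) (hQ1 : ∑ I : Idx n, Q I = 1) :
    ∑ I : Idx n, Q I * Real.log (P I) ≤ ∑ I : Idx n, Q I * Real.log (Q I) := by
  have hterm : ∀ I : Idx n, Q I * Real.log (P I) - Q I * Real.log (Q I) ≤ P I - Q I := by
    intro I
    rcases eq_or_lt_of_le (hQ I) with h | h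
    · rw [← h]
      simpa using le_of_lt (hP I)
    · have hx : 0 < P I / Q I := div_pos (hP I) h
      have hlog := Real.log_le_sub_one_of_pos hx
      rw [Real.log_div (ne_of_gt (hP I)) (ne_of_gt h)] at hlog
      have h2 := mul_le_mul_of_nonneg_left hlog (le_of_lt h)
      have h3 : Q I * (P I / Q I) = P I := by field_simp
      nlinarith
  have hs := Finset.sum_le_sum (s := (Finset.univ : Finset (Idx n))) (fun I _ => hterm I)
  rw [Finset.sum_sub_distrib, Finset.sum_sub_distrib, hP1, hQ1] at hs
  linarith

lemma one_sub_prod_le_sum {ι : Type*} [DecidableEq ι] (s : Finset ι) (c : ι → ℝ)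
    (h0 : ∀ k, 0 ≤ c k) (h1 : ∀ k, c k ≤ 1) :
    1 - ∏ k ∈ s, c k ≤ ∑ k ∈ s, (1 - c k) := by
  induction s using Finset.induction with
  | empty => simp
  | @insert a t ha ih =>
    rw [Finset.prod_insert ha, Finset.sum_insert ha]
    have hp0 : 0 ≤ ∏ k ∈ t, c k := Finset.prod_nonneg fun i _ => h0 i
    have hp1 : ∏ k ∈ t, c k ≤ 1 := Finset.prod_le_one (fun i _ => h0 i) (fun i _ => h1 i)
    nlinarith [h0 a, h1 a]

end Aux2
end MOT

namespace MOT

lemma exists_rounding {m : ℕ} {n : Fin m → ℕ} (hm : 1 ≤ m) (F : Tensor n)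
    (hF0 : ∀ I, 0 ≤ F I) (hF1 : ∑ I : Idx n, F I = 1)
    (s : ∀ k : Fin m, Fin (n k) → ℝ) (hs0 : ∀ k j, 0 ≤ s k j)
    (hs1 : ∀ k, ∑ j, s k j = 1) :
    ∃ Q : Tensor n, (∀ I, 0 ≤ Q I) ∧ (∀ k j, marginal Q k j = s k j) ∧
      ∑ I : Idx n, |Q I - F I| ≤ 2 * ∑ k, ∑ j, |marginal F k j - s k j| := by
  classical
  set c : ∀ k : Fin m, Fin (n k) → ℝ := fun k j => min 1 (s k j / marginal F k j) with hc
  have hc0 : ∀ k j, 0 ≤ c k j := fun k j =>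
    le_min zero_le_one (div_nonneg (hs0 k j) (marginal_nonneg hF0 k j))
  have hc1 : ∀ k j, c k j ≤ 1 := fun k j => min_le_left _ _
  have hcm : ∀ k j, c k j * marginal F k j = min (marginal F k j) (s k j) := by
    intro k j
    rcases eq_or_lt_of_le (marginal_nonneg hF0 k j) with h | h
    · rw [← h, mul_zero]
      exact (min_eq_left (hs0 k j)).symm
    · rw [hc]
      simp only
      rw [min_mul_of_nonneg _ _ (le_of_lt h), one_mul, div_mul_cancel₀ _ (ne_of_gt h)]
  set G : Tensor n := fun I => F I * ∏ k, c k (I k) with hG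
  have hG0 : ∀ I, 0 ≤ G I := fun I =>
    mul_nonneg (hF0 I) (Finset.prod_nonneg fun k _ => hc0 k (I k))
  have hGleF : ∀ I, G I ≤ F I := by
    intro I
    have h5 : ∏ k, c k (I k) ≤ 1 :=
      Finset.prod_le_one (fun k _ => hc0 k _) (fun k _ => hc1 k _)
    calc G I = F I * ∏ k, c k (I k) := rfl
      _ ≤ F I * 1 := mul_le_mul_of_nonneg_left h5 (hF0 I)
      _ = F I := mul_one _
  have hmargG_le : ∀ k j, marginal G k j ≤ min (marginal F k j) (s k j) := by
    intro k j
    rw [← hcm k j]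
    unfold marginal
    rw [Finset.mul_sum]
    refine Finset.sum_le_sum fun I _ => ?_
    simp only [mul_ite, mul_zero]
    split_ifs with h
    · subst h
      have hsplit : ∏ l, c l (I l) = c k (I k) * ∏ l ∈ Finset.univ.erase k, c l (I l) :=
        (Finset.mul_prod_erase Finset.univ _ (Finset.mem_univ k)).symm
      have hrest1 : ∏ l ∈ Finset.univ.erase k, c l (I l) ≤ 1 :=
        Finset.prod_le_one (fun l _ => hc0 l _) (fun l _ => hc1 l _)
      calc G I = F I * (c k (I k) * ∏ l ∈ Finset.univ.erase k, c l (I l)) := by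
            rw [hG]; simp only; rw [hsplit]
        _ ≤ F I * (c k (I k) * 1) := by
            refine mul_le_mul_of_nonneg_left ?_ (hF0 I)
            exact mul_le_mul_of_nonneg_left hrest1 (hc0 k _)
        _ = c k (I k) * F I := by ring
    · exact le_rfl
  set err : ℝ := 1 - ∑ I : Idx n, G I with herr
  have hFG : ∑ I : Idx n, (F I - G I) = err := by
    rw [Finset.sum_sub_distrib, hF1, herr]
  have herr0 : 0 ≤ err := by
    rw [← hFG]
    exact Finset.sum_nonneg fun I _ => sub_nonneg.mpr (hGleF I)
  have habsFG : ∑ I : Idx n, |G I - F I| = err := by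
    rw [← hFG]
    exact Finset.sum_congr rfl fun I _ => by
      rw [abs_sub_comm, abs_of_nonneg (sub_nonneg.mpr (hGleF I))]
  have herr_le : err ≤ ∑ k, ∑ j, |marginal F k j - s k j| := by
    have e1 : err = ∑ I : Idx n, F I * (1 - ∏ k, c k (I k)) := by
      rw [← hFG]
      exact Finset.sum_congr rfl fun I _ => by rw [hG]; ring
    have e2 : ∑ I : Idx n, F I * (1 - ∏ k, c k (I k)) ≤
        ∑ I : Idx n, F I * ∑ k, (1 - c k (I k)) := by
      refine Finset.sum_le_sum fun I _ => ?_
      refine mul_le_mul_of_nonneg_left ?_ (hF0 I)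
      exact one_sub_prod_le_sum Finset.univ (fun k => c k (I k))
        (fun k => hc0 k _) (fun k => hc1 k _)
    have e3 : ∑ I : Idx n, F I * ∑ k, (1 - c k (I k)) =
        ∑ k, ∑ j, (1 - c k j) * marginal F k j :=
      sum_mul_sum_modes F (fun k j => 1 - c k j)
    have e4 : ∀ k j, (1 - c k j) * marginal F k j ≤ |marginal F k j - s k j| := by
      intro k j
      have h6 : (1 - c k j) * marginal F k j
          = marginal F k j - min (marginal F k j) (s k j) := by
        rw [← hcm k j]; ring
      rw [h6]
      rcases le_total (marginal F k j) (s k j) with h7 | h7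
      · rw [min_eq_left h7]
        simp [abs_nonneg]
      · rw [min_eq_right h7]
        exact le_abs_self _
    calc err ≤ ∑ k, ∑ j, (1 - c k j) * marginal F k j := by rw [e1, ← e3]; exact e2
      _ ≤ ∑ k, ∑ j, |marginal F k j - s k j| :=
        Finset.sum_le_sum fun k _ => Finset.sum_le_sum fun j _ => e4 k j
  set d : ∀ k : Fin m, Fin (n k) → ℝ := fun k j => s k j - marginal G k j with hd
  have hd0 : ∀ k j, 0 ≤ d k j := fun k j =>
    sub_nonneg.mpr ((hmargG_le k j).trans (min_le_right _ _))
  have hdsum : ∀ k, ∑ j, d k j = err := by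
    intro k
    rw [hd]
    simp only
    rw [Finset.sum_sub_distrib, hs1, sum_marginal, herr]
  by_cases hz : err = 0
  · refine ⟨G, hG0, ?_, ?_⟩
    · intro k j
      have h8 : d k j = 0 := by
        have h9 := hdsum k
        rw [hz] at h9
        exact (Finset.sum_eq_zero_iff_of_nonneg (fun j _ => hd0 k j)).1 h9 j (Finset.mem_univ j)
      have : s k j - marginal G k j = 0 := h8
      linarith
    · rw [habsFG, hz]
      positivity
  · have herrpos : 0 < err := lt_of_le_of_ne herr0 (Ne.symm hz)
    set R : Tensor n := fun I => (∏ k, d k (I k)) / err ^ (m - 1) with hR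
    have hp : 0 < err ^ (m - 1) := pow_pos herrpos _
    have hR0 : ∀ I, 0 ≤ R I := fun I =>
      div_nonneg (Finset.prod_nonneg fun k _ => hd0 k _) hp.le
    have hmargR : ∀ k j, marginal R k j = d k j := by
      intro k j
      have h1 : marginal R k j = marginal (fun I => ∏ l, d l (I l)) k j / err ^ (m - 1) :=
        marginal_div _ _ k j
      rw [h1, marginal_prod]
      rw [Finset.prod_congr rfl (fun l (_ : l ∈ Finset.univ.erase k) => hdsum l),
        Finset.prod_const, Finset.card_erase_of_mem (Finset.mem_univ k),
        Finset.card_univ, Fintype.card_fin]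
      rw [mul_div_assoc, div_self hp.ne', mul_one]
    have hsumR : ∑ I : Idx n, R I = err := by
      rw [hR]
      simp only
      rw [← Finset.sum_div, sum_prod_eval,
        Finset.prod_congr rfl (fun l (_ : l ∈ (Finset.univ : Finset (Fin m))) => hdsum l),
        Finset.prod_const, Finset.card_univ, Fintype.card_fin]
      have hms : err ^ m = err ^ (m - 1) * err := by
        rw [← pow_succ]
        congr 1
        omega
      rw [hms, mul_comm, mul_div_assoc, div_self hp.ne', mul_one]
    refine ⟨fun I => G I + R I, fun I => add_nonneg (hG0 I) (hR0 I), ?_, ?_⟩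
    · intro k j
      rw [marginal_add, hmargR]
      have : d k j = s k j - marginal G k j := rfl
      linarith
    · calc ∑ I : Idx n, |G I + R I - F I| ≤ ∑ I : Idx n, (|G I - F I| + R I) := by
            refine Finset.sum_le_sum fun I _ => ?_
            have h10 : G I + R I - F I = (G I - F I) + R I := by ring
            rw [h10]
            calc |(G I - F I) + R I| ≤ |G I - F I| + |R I| := abs_add_le _ _
              _ = |G I - F I| + R I := by rw [abs_of_nonneg (hR0 I)]
        _ = err + err := by rw [Finset.sum_add_distrib, habsFG, hsumR]
        _ ≤ 2 * ∑ k, ∑ j, |marginal F k j - s k j| := by linarith [herr_le]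

end MOT

namespace MOT

lemma log_card_pi {m : ℕ} {n : Fin m → ℕ} (hn : ∀ k, 2 ≤ n k) :
    Real.log (Fintype.card (Idx n)) = ∑ k, Real.log (n k : ℝ) := by
  have h1 : Fintype.card (Idx n) = ∏ k, n k := by
    rw [Fintype.card_pi]
    simp
  rw [h1, Nat.cast_prod, Real.log_prod]
  intro k _
  have := hn k
  positivity



/-- Theorem `thm:EpsAccurateApprox`: the rounded output `P̂` of the
approximate multi-marginal Sinkhorn algorithm is an `ε`-approximate solution of the
unregularized problem with `ε = 2 η ε_log + 2 η ∑_k log n_k + 4 ‖C‖_∞ ε_stop`. -/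
theorem eps_accurate_solution
    {m : ℕ} (hm : 2 ≤ m) {n : Fin m → ℕ} (hn : ∀ k, 2 ≤ n k)
    (C : Tensor n) (hC : ∀ I, 0 ≤ C I)
    (η : ℝ) (hη : 0 < η)
    (r : ∀ k : Fin m, Fin (n k) → ℝ) (hr : ∀ k, IsSimplex (r k))
    (Kt : Tensor n) (hKt : ∀ I, 0 < Kt I)
    (εlog : ℝ) (hεlog0 : 0 < εlog) (hεlog1 : εlog ≤ 1)
    (hlog : supAbs (fun I : Idx n =>
      Real.log (Real.exp (-C I / η)) - Real.log (Kt I)) ≤ εlog)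
    (Pt : Tensor n) (hscal : IsScaling Kt Pt) (hPt1 : tnorm1 Pt = 1)
    (εstop : ℝ) (hεs : 0 < εstop)
    (hstop : ∑ k, vnorm1 (fun j => marginal Pt k j - r k j) ≤ εstop)
    (Phat : Tensor n) (hPhatF : Feasible r Phat)
    (hPhatRound : tnorm1 (fun I => Phat I - Pt I) ≤
      2 * ∑ k, vnorm1 (fun j => r k j - marginal Pt k j))
    (Pstar : Tensor n) (hPstarF : Feasible r Pstar)
    (hPstarMin : ∀ Q : Tensor n, Feasible r Q → tinner C Pstar ≤ tinner C Q) :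
    tinner C Phat - tinner C Pstar ≤
      2 * η * εlog + 2 * η * ∑ k, Real.log (n k : ℝ) + 4 * supAbs C * εstop := by
  classical
  obtain ⟨β, hβ⟩ := hscal
  haveI hne : Nonempty (Idx n) := ⟨fun k => ⟨0, by have := hn k; omega⟩⟩
  have k0 : Fin m := ⟨0, by omega⟩
  -- positivity and normalization of Pt
  have hPtpos : ∀ I, 0 < Pt I := by
    intro I
    rw [hβ I]
    have := hKt I
    positivity
  have hPtsum : ∑ I : Idx n, Pt I = 1 := by
    rw [← hPt1]
    unfold tnorm1
    exact Finset.sum_congr rfl fun I _ => (abs_of_pos (hPtpos I)).symm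
  -- the target marginals s
  set s : ∀ k : Fin m, Fin (n k) → ℝ := fun k => marginal Pt k with hs
  have hs0 : ∀ k j, 0 ≤ s k j := fun k j => marginal_nonneg (fun I => (hPtpos I).le) k j
  have hs1 : ∀ k, ∑ j, s k j = 1 := fun k => by
    rw [hs]; simp only; rw [sum_marginal]; exact hPtsum
  -- δ
  set δ : ℝ := ∑ k, vnorm1 (fun j => r k j - marginal Pt k j) with hδ
  have hδε : δ ≤ εstop := by
    refine le_trans (le_of_eq ?_) hstop
    unfold vnorm1
    exact Finset.sum_congr rfl fun k _ => Finset.sum_congr rfl fun j _ => abs_sub_comm _ _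
  have hδeq : δ = ∑ k, ∑ j, |marginal Pstar k j - s k j| := by
    rw [hδ]
    unfold vnorm1
    refine Finset.sum_congr rfl fun k _ => Finset.sum_congr rfl fun j _ => ?_
    rw [hPstarF.2 k j]
  -- rounding of Pstar towards the marginals of Pt
  have hPstarSum : ∑ I : Idx n, Pstar I = 1 := by
    rw [← sum_marginal Pstar k0]
    calc ∑ j, marginal Pstar k0 j = ∑ j, r k0 j :=
          Finset.sum_congr rfl fun j _ => hPstarF.2 k0 j
      _ = 1 := (hr k0).2
  obtain ⟨Q, hQ0, hQm, hQdist⟩ :=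
    exists_rounding (by omega) Pstar hPstarF.1 hPstarSum s hs0 hs1
  have hQsum : ∑ I : Idx n, Q I = 1 := by
    rw [← sum_marginal Q k0]
    calc ∑ j, marginal Q k0 j = ∑ j, s k0 j := Finset.sum_congr rfl fun j _ => hQm k0 j
      _ = 1 := hs1 k0
  -- basic facts
  have hCnn : 0 ≤ supAbs C := supAbs_nonneg C
  have hlognn : 0 ≤ ∑ k, Real.log (n k : ℝ) :=
    Finset.sum_nonneg fun k _ => Real.log_nonneg (by exact_mod_cast Nat.one_le_of_lt (hn k))
  -- Part (a): Phat vs Pt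
  have hA1 : tinner C Phat - tinner C Pt ≤ supAbs C * (2 * δ) := by
    have h1 : tinner C Phat - tinner C Pt = tinner C (fun I => Phat I - Pt I) := by
      unfold tinner
      rw [← Finset.sum_sub_distrib]
      exact Finset.sum_congr rfl fun I _ => by ring
    rw [h1]
    calc tinner C (fun I => Phat I - Pt I)
        ≤ supAbs C * tnorm1 (fun I => Phat I - Pt I) := tinner_le_supAbs_mul _ _
      _ ≤ supAbs C * (2 * δ) := mul_le_mul_of_nonneg_left (by rw [hδ]; exact hPhatRound) hCnn
  -- Part (c): Q vs Pstar
  have hC1 : tinner C Q - tinner C Pstar ≤ supAbs C * (2 * δ) := by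
    have h1 : tinner C Q - tinner C Pstar = tinner C (fun I => Q I - Pstar I) := by
      unfold tinner
      rw [← Finset.sum_sub_distrib]
      exact Finset.sum_congr rfl fun I _ => by ring
    rw [h1]
    calc tinner C (fun I => Q I - Pstar I)
        ≤ supAbs C * tnorm1 (fun I => Q I - Pstar I) := tinner_le_supAbs_mul _ _
      _ ≤ supAbs C * (2 * δ) := by
          refine mul_le_mul_of_nonneg_left ?_ hCnn
          rw [hδeq]
          exact hQdist
  -- Part (b): Pt vs Q
  have hB1 : tinner C Pt - tinner C Q ≤ 2 * η * εlog + η * ∑ k, Real.log (n k : ℝ) := by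
    -- closeness of C and -η log Kt
    have hClose : ∀ I, |C I + η * Real.log (Kt I)| ≤ η * εlog := by
      intro I
      have h1 := le_trans
        (abs_le_supAbs (fun I : Idx n => Real.log (Real.exp (-C I / η)) - Real.log (Kt I)) I) hlog
      simp only [Real.log_exp] at h1
      have h2 := mul_le_mul_of_nonneg_left h1 hη.le
      have h3 : C I + η * Real.log (Kt I) = -(η * (-C I / η - Real.log (Kt I))) := by
        field_simp
        ring
      calc |C I + η * Real.log (Kt I)|
          = |η * (-C I / η - Real.log (Kt I))| := by rw [h3, abs_neg]
        _ = |η| * |-C I / η - Real.log (Kt I)| := abs_mul _ _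
        _ = η * |-C I / η - Real.log (Kt I)| := by rw [abs_of_pos hη]
        _ ≤ η * εlog := h2
    -- log of Pt via the scaling
    have hlogPt : ∀ I, Real.log (Kt I) = Real.log (Pt I) - ∑ k, β k (I k) := by
      intro I
      have h1 : Real.log (Pt I) = Real.log (Kt I) + ∑ k, β k (I k) := by
        rw [hβ I, Real.log_mul (ne_of_gt (hKt I)) (by positivity), Real.log_prod]
        · simp [Real.log_exp]
        · intro k _
          positivity
      linarith
    set A : ℝ := ∑ I : Idx n, (C I + η * Real.log (Kt I)) * (Pt I - Q I) with hAdef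
    set B : ℝ := ∑ I : Idx n, Real.log (Kt I) * (Pt I - Q I) with hBdef
    have hdecomp : tinner C Pt - tinner C Q = A - η * B := by
      unfold tinner
      rw [hAdef, hBdef, Finset.mul_sum, ← Finset.sum_sub_distrib, ← Finset.sum_sub_distrib]
      exact Finset.sum_congr rfl fun I _ => by ring
    have hA : A ≤ 2 * η * εlog := by
      have h1 : A ≤ ∑ I : Idx n, η * εlog * (Pt I + Q I) := by
        refine Finset.sum_le_sum fun I _ => ?_
        have h2 : |Pt I - Q I| ≤ Pt I + Q I := by
          rw [abs_le]
          constructor <;> nlinarith [hPtpos I, hQ0 I]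
        calc (C I + η * Real.log (Kt I)) * (Pt I - Q I)
            ≤ |(C I + η * Real.log (Kt I)) * (Pt I - Q I)| := le_abs_self _
          _ = |C I + η * Real.log (Kt I)| * |Pt I - Q I| := abs_mul _ _
          _ ≤ (η * εlog) * (Pt I + Q I) := by
              refine mul_le_mul (hClose I) h2 (abs_nonneg _) (by positivity)
      have h3 : ∑ I : Idx n, η * εlog * (Pt I + Q I) = 2 * η * εlog := by
        rw [← Finset.mul_sum, Finset.sum_add_distrib, hPtsum, hQsum]
        ring
      linarith
    have hB : -(η * B) ≤ η * ∑ k, Real.log (n k : ℝ) := by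
      have hBeq : B = ∑ I : Idx n, Real.log (Pt I) * (Pt I - Q I) := by
        have h1 : B = ∑ I : Idx n, (Real.log (Pt I) * (Pt I - Q I)
            - (fun J => Pt J - Q J) I * ∑ k, β k (I k)) := by
          rw [hBdef]
          exact Finset.sum_congr rfl fun I _ => by rw [hlogPt I]; ring
        rw [h1, Finset.sum_sub_distrib, sum_mul_sum_modes (fun J => Pt J - Q J) β]
        have h2 : ∀ k j, marginal (fun J => Pt J - Q J) k j = 0 := by
          intro k j
          have h3 : marginal (fun J => Pt J - Q J) k j = marginal Pt k j - marginal Q k j := by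
            unfold marginal
            rw [← Finset.sum_sub_distrib]
            exact Finset.sum_congr rfl fun I _ => by split_ifs <;> simp
          rw [h3, hQm k j]
          simp [hs]
        simp [h2]
      have hGibbs : ∑ I : Idx n, Q I * Real.log (Pt I) ≤ ∑ I : Idx n, Q I * Real.log (Q I) :=
        sum_mul_log_le hPtpos hQ0 hPtsum hQsum
      have hHPt : entropy Pt ≤ ∑ k, Real.log (n k : ℝ) := by
        calc entropy Pt ≤ Real.log (Fintype.card (Idx n)) := entropy_le_log_card hPtpos hPtsum
          _ = ∑ k, Real.log (n k : ℝ) := log_card_pi hn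
      have hHQ : 0 ≤ entropy Q := entropy_nonneg hQ0 hQsum
      have hBval : B = -entropy Pt - ∑ I : Idx n, Q I * Real.log (Pt I) := by
        rw [hBeq]
        unfold entropy
        rw [neg_neg, ← Finset.sum_sub_distrib]
        exact Finset.sum_congr rfl fun I _ => by ring
      have hQent : ∑ I : Idx n, Q I * Real.log (Q I) = -entropy Q := by
        unfold entropy
        rw [neg_neg]
      have e1 : η * (∑ I : Idx n, Q I * Real.log (Pt I)) ≤
          η * (∑ I : Idx n, Q I * Real.log (Q I)) :=
        mul_le_mul_of_nonneg_left hGibbs hη.le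
      have e2 : η * entropy Pt ≤ η * ∑ k, Real.log (n k : ℝ) :=
        mul_le_mul_of_nonneg_left hHPt hη.le
      have e3 : 0 ≤ η * entropy Q := mul_nonneg hη.le hHQ
      have hB' : η * B = -(η * entropy Pt) - η * ∑ I : Idx n, Q I * Real.log (Pt I) := by
        rw [hBval]; ring
      have hQ' : η * ∑ I : Idx n, Q I * Real.log (Q I) = -(η * entropy Q) := by
        rw [hQent]; ring
      linarith
    linarith [hdecomp, hA, hB]
  -- assemble
  have hfinal : supAbs C * δ ≤ supAbs C * εstop := mul_le_mul_of_nonneg_left hδε hCnn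
  have hηlog : 0 ≤ η * ∑ k, Real.log (n k : ℝ) := mul_nonneg hη.le hlognn
  linarith [hA1, hB1, hC1, hfinal, hηlog]


end MOT
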